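/- Team satisfiability coincides with classical satisfiability for LTL: for every LTL formula φ, there exists a non-empty team T with T ⊨ φ under team semantics if and only if there exists a trace t with t ⊨ φ under classical LTL semantics. -/

import Mathlib

namespace TeamLTL

/-- A trace over a set `AP` of atomic propositions: an infinite sequence of letters,
each letter being a set of atomic propositions. -/
abbrev Trace (AP : Type) : Type := ℕ → Set AP

/-- The suffix `t[i,∞)` of a trace. -/
def Trace.shift {AP : Type} (t : Trace AP) (i : ℕ) : Trace AP := fun n => t (n + i)

/-- The suffix team `T[i,∞) = { t[i,∞) | t ∈ T }`. -/
def teamShift {AP : Type} (T : Set (Trace AP)) (i : ℕ) : Set (Trace AP) :=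
  (fun t => Trace.shift t i) '' T

/-- LTL formulae in negation normal form. -/
inductive LTL (AP : Type) : Type
  | atom : AP → LTL AP
  | natom : AP → LTL AP
  | conj : LTL AP → LTL AP → LTL AP
  | disj : LTL AP → LTL AP → LTL AP
  | next : LTL AP → LTL AP
  | untl : LTL AP → LTL AP → LTL AP
  | rels : LTL AP → LTL AP → LTL AP

/-- Team semantics for LTL: `TeamSat T φ` means `T ⊨ φ`. -/
def TeamSat {AP : Type} : Set (Trace AP) → LTL AP → Prop
  | T, .atom p => ∀ t ∈ T, p ∈ t 0
  | T, .natom p => ∀ t ∈ T, p ∉ t 0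
  | T, .conj φ ψ => TeamSat T φ ∧ TeamSat T ψ
  | T, .disj φ ψ => ∃ T₁ T₂ : Set (Trace AP), T₁ ∪ T₂ = T ∧ TeamSat T₁ φ ∧ TeamSat T₂ ψ
  | T, .next φ => TeamSat (teamShift T 1) φ
  | T, .untl φ ψ => ∃ k : ℕ, TeamSat (teamShift T k) ψ ∧ ∀ k' < k, TeamSat (teamShift T k') φ
  | T, .rels φ ψ => ∀ k : ℕ, TeamSat (teamShift T k) ψ ∨ ∃ k' < k, TeamSat (teamShift T k') φ

/-- Classical semantics for LTL on a single trace: `Sat t φ` means `t ⊨ φ`. -/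
def Sat {AP : Type} : Trace AP → LTL AP → Prop
  | t, .atom p => p ∈ t 0
  | t, .natom p => p ∉ t 0
  | t, .conj φ ψ => Sat t φ ∧ Sat t ψ
  | t, .disj φ ψ => Sat t φ ∨ Sat t ψ
  | t, .next φ => Sat (Trace.shift t 1) φ
  | t, .untl φ ψ => ∃ k : ℕ, Sat (Trace.shift t k) ψ ∧ ∀ k' < k, Sat (Trace.shift t k') φ
  | t, .rels φ ψ => ∀ k : ℕ, Sat (Trace.shift t k) ψ ∨ ∃ k' < k, Sat (Trace.shift t k') φ

/-- The eventually operator `F φ := (p ∨ ¬p) U φ`. -/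
def eventually {AP : Type} (p : AP) (φ : LTL AP) : LTL AP :=
  .untl (.disj (.atom p) (.natom p)) φ

lemma teamShift_empty {AP : Type} (k : ℕ) :
    teamShift (∅ : Set (Trace AP)) k = ∅ := Set.image_empty _

lemma teamShift_singleton {AP : Type} (t : Trace AP) (k : ℕ) :
    teamShift {t} k = {t.shift k} := Set.image_singleton

lemma teamShift_mono {AP : Type} {T T' : Set (Trace AP)} (h : T' ⊆ T) (k : ℕ) :
    teamShift T' k ⊆ teamShift T k := Set.image_mono h

lemma empty_teamSat {AP : Type} (φ : LTL AP) : TeamSat (∅ : Set (Trace AP)) φ := by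
  induction φ with
  | atom p => intro t ht; exact absurd ht (Set.notMem_empty t)
  | natom p => intro t ht; exact absurd ht (Set.notMem_empty t)
  | conj φ ψ ih1 ih2 => exact ⟨ih1, ih2⟩
  | disj φ ψ ih1 ih2 => exact ⟨∅, ∅, by simp, ih1, ih2⟩
  | next φ ih => show TeamSat _ φ; rw [teamShift_empty]; exact ih
  | untl φ ψ ih1 ih2 =>
      exact ⟨0, by rw [teamShift_empty]; exact ih2,
        fun k' h => absurd h (Nat.not_lt_zero _)⟩
  | rels φ ψ ih1 ih2 =>
      intro k; left; rw [teamShift_empty]; exact ih2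

lemma teamSat_mono {AP : Type} {T T' : Set (Trace AP)} (φ : LTL AP)
    (hsub : T' ⊆ T) (h : TeamSat T φ) : TeamSat T' φ := by
  induction φ generalizing T T' with
  | atom p => exact fun t ht => h t (hsub ht)
  | natom p => exact fun t ht => h t (hsub ht)
  | conj φ ψ ih1 ih2 => exact ⟨ih1 hsub h.1, ih2 hsub h.2⟩
  | disj φ ψ ih1 ih2 =>
      obtain ⟨T₁, T₂, hu, h1, h2⟩ := h
      refine ⟨T₁ ∩ T', T₂ ∩ T', ?_, ih1 Set.inter_subset_left h1,
        ih2 Set.inter_subset_left h2⟩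
      rw [← Set.union_inter_distrib_right, hu, Set.inter_eq_right.2 hsub]
  | next φ ih => exact ih (teamShift_mono hsub 1) h
  | untl φ ψ ih1 ih2 =>
      obtain ⟨k, hk, hk'⟩ := h
      exact ⟨k, ih2 (teamShift_mono hsub k) hk,
        fun k' h' => ih1 (teamShift_mono hsub k') (hk' k' h')⟩
  | rels φ ψ ih1 ih2 =>
      intro k
      rcases h k with hk | ⟨k', hk', hφ⟩
      · exact Or.inl (ih2 (teamShift_mono hsub k) hk)
      · exact Or.inr ⟨k', hk', ih1 (teamShift_mono hsub k') hφ⟩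

lemma singleton_teamSat_iff {AP : Type} (φ : LTL AP) (t : Trace AP) :
    TeamSat {t} φ ↔ Sat t φ := by
  induction φ generalizing t with
  | atom p => simp [TeamSat, Sat]
  | natom p => simp [TeamSat, Sat]
  | conj φ ψ ih1 ih2 =>
      exact and_congr (ih1 t) (ih2 t)
  | disj φ ψ ih1 ih2 =>
      constructor
      · rintro ⟨T₁, T₂, hu, h1, h2⟩
        have ht : t ∈ T₁ ∪ T₂ := hu ▸ rfl
        rcases ht with ht | ht
        · left; exact (ih1 t).1 (teamSat_mono φ (Set.singleton_subset_iff.2 ht) h1)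
        · right; exact (ih2 t).1 (teamSat_mono ψ (Set.singleton_subset_iff.2 ht) h2)
      · rintro (h | h)
        · exact ⟨{t}, ∅, by simp, (ih1 t).2 h, empty_teamSat ψ⟩
        · exact ⟨∅, {t}, by simp, empty_teamSat φ, (ih2 t).2 h⟩
  | next φ ih =>
      show TeamSat (teamShift {t} 1) φ ↔ _
      rw [teamShift_singleton]; exact ih _
  | untl φ ψ ih1 ih2 =>
      constructor
      · rintro ⟨k, hk, hk'⟩
        rw [teamShift_singleton] at hk
        exact ⟨k, (ih2 _).1 hk, fun k' h' => (ih1 _).1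
          (by rw [← teamShift_singleton t k']; exact hk' k' h')⟩
      · rintro ⟨k, hk, hk'⟩
        exact ⟨k, by rw [teamShift_singleton]; exact (ih2 _).2 hk,
          fun k' h' => by rw [teamShift_singleton]; exact (ih1 _).2 (hk' k' h')⟩
  | rels φ ψ ih1 ih2 =>
      constructor
      · intro h k
        rcases h k with hk | ⟨k', hk', hφ⟩
        · rw [teamShift_singleton] at hk; exact Or.inl ((ih2 _).1 hk)
        · rw [teamShift_singleton] at hφ; exact Or.inr ⟨k', hk', (ih1 _).1 hφ⟩
      · intro h k
        rcases h k with hk | ⟨k', hk', hφ⟩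
        · exact Or.inl (by rw [teamShift_singleton]; exact (ih2 _).2 hk)
        · exact Or.inr ⟨k', hk', by rw [teamShift_singleton]; exact (ih1 _).2 hφ⟩

/-- Team satisfiability coincides with classical satisfiability for LTL. -/
theorem team_sat_iff_classical_sat (φ : LTL ℕ) :
    (∃ T : Set (Trace ℕ), T.Nonempty ∧ TeamSat T φ) ↔ (∃ t : Trace ℕ, Sat t φ) := by
  constructor
  · rintro ⟨T, ⟨t, ht⟩, hT⟩
    exact ⟨t, (singleton_teamSat_iff φ t).1
      (teamSat_mono φ (Set.singleton_subset_iff.2 ht) hT)⟩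
  · rintro ⟨t, ht⟩
    exact ⟨{t}, Set.singleton_nonempty t, (singleton_teamSat_iff φ t).2 ht⟩

end TeamLTL
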